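/- Let (w_1,…,w_N; v_1,…,v_N; W) be a Knapsack instance with positive integer weights and values and let G be the associated concurrent-move game tree. For every subset J ⊆ {1,…,N} with Σ_{i∈J} w_i ≤ W, consider the leader behavioral strategy that plays the uniform distribution over l_1,…,l_N at the root and, in each subgame I_i, plays ⊕ with probability 1 if i ∈ J and ⊖ with probability 1 otherwise. Under a follower best response to this strategy with ties broken in favor of the leader, the follower plays f_0 at the root and L in each I_i with i ∈ J and R in each I_i with i ∉ J, and the leader's expected utility equals Σ_{i∈J} v_i. -/
import Mathlib


open scoped BigOperators

noncomputable section

namespace KnapsackGame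

/-- A behavioral strategy of the leader in the concurrent-move game tree associated with a
Knapsack instance with `N` items: `q i` is the probability of root action `l_i`, and
`r i` is the probability of action `⊕` in the subgame `I_i`. -/
structure LStrat (N : ℕ) where
  q : Fin N → ℝ
  r : Fin N → ℝ

/-- A behavioral strategy of the follower: `g 0` is the probability of root action `f_0`,
`g k.succ` the probability of `f_{k+1}`, and `s i` the probability of `L` in subgame `I_i`. -/
structure FStrat (N : ℕ) where
  g : Fin (N + 1) → ℝ
  s : Fin N → ℝ

/-- Validity of a leader behavioral strategy. -/
def LValid {N : ℕ} (σ : LStrat N) : Prop :=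
  (∀ i, 0 ≤ σ.q i) ∧ (∑ i, σ.q i) = 1 ∧ ∀ i, 0 ≤ σ.r i ∧ σ.r i ≤ 1

/-- Validity of a follower behavioral strategy. -/
def FValid {N : ℕ} (τ : FStrat N) : Prop :=
  (∀ k, 0 ≤ τ.g k) ∧ (∑ k, τ.g k) = 1 ∧ ∀ i, 0 ≤ τ.s i ∧ τ.s i ≤ 1

/-- The leader's expected utility in the subgame `I_i`:
`(⊕,L) ↦ N·v i`, `(⊕,R) ↦ 0`, `(⊖,L) ↦ N·v i`, `(⊖,R) ↦ 0`. -/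
def subEU1 (N : ℕ) (v : Fin N → ℕ) (σ : LStrat N) (τ : FStrat N) (i : Fin N) : ℝ :=
  σ.r i * (τ.s i * ((N : ℝ) * (v i : ℝ)) + (1 - τ.s i) * 0) +
    (1 - σ.r i) * (τ.s i * ((N : ℝ) * (v i : ℝ)) + (1 - τ.s i) * 0)

/-- The follower's expected utility in the subgame `I_i`:
`(⊕,L) ↦ -N·w i`, `(⊕,R) ↦ -N·w i`, `(⊖,L) ↦ -N·w i`, `(⊖,R) ↦ 0`. -/
def subEU2 (N : ℕ) (w : Fin N → ℕ) (σ : LStrat N) (τ : FStrat N) (i : Fin N) : ℝ :=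
  σ.r i * (τ.s i * (-((N : ℝ) * (w i : ℝ))) + (1 - τ.s i) * (-((N : ℝ) * (w i : ℝ)))) +
    (1 - σ.r i) * (τ.s i * (-((N : ℝ) * (w i : ℝ))) + (1 - τ.s i) * 0)

/-- The leader's expected utility in the whole game: terminal payoffs after `f_k`, `k ≥ 1`,
give the leader `0`. -/
def EU1 (N : ℕ) (v : Fin N → ℕ) (σ : LStrat N) (τ : FStrat N) : ℝ :=
  τ.g 0 * (∑ i, σ.q i * subEU1 N v σ τ i) +
    ∑ k : Fin N, τ.g k.succ * (∑ i, σ.q i * (0 : ℝ))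

/-- The follower's expected utility in the whole game: after root actions `(l_i, f_{k+1})`
the follower gets `N·M − W − M` if `i = k` and `−W − M` otherwise. -/
def EU2 (N : ℕ) (w : Fin N → ℕ) (W M : ℕ) (σ : LStrat N) (τ : FStrat N) : ℝ :=
  τ.g 0 * (∑ i, σ.q i * subEU2 N w σ τ i) +
    ∑ k : Fin N, τ.g k.succ *
      (∑ i, σ.q i *
        (if i = k then (N : ℝ) * (M : ℝ) - (W : ℝ) - (M : ℝ) else -(W : ℝ) - (M : ℝ)))

/-- `τ` is a best response of the follower to the leader strategy `σ`. -/
def BestResponse (N : ℕ) (w : Fin N → ℕ) (W M : ℕ) (σ : LStrat N) (τ : FStrat N) : Prop :=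
  FValid τ ∧ ∀ τ' : FStrat N, FValid τ' → EU2 N w W M σ τ' ≤ EU2 N w W M σ τ

lemma EU1_eq {N : ℕ} (hN : 0 < N) (v : Fin N → ℕ) (J : Finset (Fin N)) (τ : FStrat N) :
    EU1 N v ⟨fun _ => (N : ℝ)⁻¹, fun i => if i ∈ J then 1 else 0⟩ τ =
      τ.g 0 * ∑ i, τ.s i * (v i : ℝ) := by
  have hN' : (N : ℝ) ≠ 0 := Nat.cast_ne_zero.mpr hN.ne'
  unfold EU1 subEU1
  dsimp only
  simp only [mul_zero, Finset.sum_const_zero, add_zero]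
  congr 1
  refine Finset.sum_congr rfl fun i _ => ?_
  by_cases h : i ∈ J <;> simp [h] <;> field_simp <;> ring

lemma EU2_eq {N : ℕ} (hN : 0 < N) (w : Fin N → ℕ) (W M : ℕ) (J : Finset (Fin N))
    (τ : FStrat N) (hg : (∑ k, τ.g k) = 1) :
    EU2 N w W M ⟨fun _ => (N : ℝ)⁻¹, fun i => if i ∈ J then 1 else 0⟩ τ =
      τ.g 0 * (-(∑ i ∈ J, (w i : ℝ)) - ∑ i ∈ Jᶜ, τ.s i * (w i : ℝ)) +
        (1 - τ.g 0) * (-(W : ℝ)) := by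
  have hN' : (N : ℝ) ≠ 0 := Nat.cast_ne_zero.mpr hN.ne'
  unfold EU2 subEU2
  dsimp only
  have h1 : (∑ i, (N : ℝ)⁻¹ *
      ((if i ∈ J then (1:ℝ) else 0) * (τ.s i * (-((N : ℝ) * (w i : ℝ))) +
        (1 - τ.s i) * (-((N : ℝ) * (w i : ℝ)))) +
        (1 - (if i ∈ J then (1:ℝ) else 0)) * (τ.s i * (-((N : ℝ) * (w i : ℝ))) +
          (1 - τ.s i) * 0))) =
      -(∑ i ∈ J, (w i : ℝ)) - ∑ i ∈ Jᶜ, τ.s i * (w i : ℝ) := by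
    have : ∀ i : Fin N, (N : ℝ)⁻¹ *
        ((if i ∈ J then (1:ℝ) else 0) * (τ.s i * (-((N : ℝ) * (w i : ℝ))) +
          (1 - τ.s i) * (-((N : ℝ) * (w i : ℝ)))) +
          (1 - (if i ∈ J then (1:ℝ) else 0)) * (τ.s i * (-((N : ℝ) * (w i : ℝ))) +
            (1 - τ.s i) * 0)) =
        if i ∈ J then -(w i : ℝ) else -(τ.s i * (w i : ℝ)) := by
      intro i
      by_cases h : i ∈ J <;> simp [h] <;> field_simp <;> ring
    rw [Finset.sum_congr rfl fun i _ => this i]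
    rw [← Finset.sum_add_sum_compl J]
    rw [Finset.sum_congr rfl fun i hi => if_pos hi,
      Finset.sum_congr rfl fun i hi => if_neg (Finset.mem_compl.mp hi)]
    rw [Finset.sum_neg_distrib, Finset.sum_neg_distrib]
    ring
  rw [h1]
  have h2 : ∀ k : Fin N, (∑ i, (N : ℝ)⁻¹ *
      (if i = k then (N : ℝ) * (M : ℝ) - (W : ℝ) - (M : ℝ) else -(W : ℝ) - (M : ℝ))) =
      -(W : ℝ) := by
    intro k
    rw [← Finset.mul_sum]
    have : (∑ i : Fin N, (if i = k then (N : ℝ) * (M : ℝ) - (W : ℝ) - (M : ℝ)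
        else -(W : ℝ) - (M : ℝ))) = (N : ℝ) * (M : ℝ) + (N:ℝ) * (-(W : ℝ) - (M : ℝ)) := by
      have : ∀ i : Fin N, (if i = k then (N : ℝ) * (M : ℝ) - (W : ℝ) - (M : ℝ)
          else -(W : ℝ) - (M : ℝ)) =
          (if i = k then (N : ℝ) * (M : ℝ) else 0) + (-(W : ℝ) - (M : ℝ)) := by
        intro i; by_cases h : i = k <;> simp [h] <;> ring
      rw [Finset.sum_congr rfl fun i _ => this i, Finset.sum_add_distrib,
        Finset.sum_ite_eq' Finset.univ k, Finset.sum_const]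
      simp [mul_comm]
    rw [this]
    field_simp
    ring
  have h4 : (∑ k : Fin N, τ.g k.succ * (∑ i, (N : ℝ)⁻¹ *
      (if i = k then (N : ℝ) * (M : ℝ) - (W : ℝ) - (M : ℝ) else -(W : ℝ) - (M : ℝ)))) =
      ∑ k : Fin N, τ.g k.succ * (-(W : ℝ)) :=
    Finset.sum_congr rfl fun k _ => by rw [h2 k]
  rw [h4, ← Finset.sum_mul]
  have h3 : (∑ k : Fin N, τ.g k.succ) = 1 - τ.g 0 := by
    rw [Fin.sum_univ_succ] at hg; linarith
  rw [h3]

/-- For every feasible knapsack subset `J` (total weight at most `W`),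
consider the leader behavioral strategy that plays uniformly over `l_1,…,l_N` at the root
and plays `⊕` with probability 1 in `I_i` for `i ∈ J` and `⊖` with probability 1 otherwise.
Under the follower best response with ties broken in favor of the leader — playing `f_0` at
the root and `L` in `I_i` for `i ∈ J`, `R` for `i ∉ J` — the leader's expected utility
equals `Σ_{i∈J} v i`. -/
theorem uniform_strategy_payoff
    (N W M : ℕ) (hN : 0 < N) (w v : Fin N → ℕ)
    (hw : ∀ i, 0 < w i) (hv : ∀ i, 0 < v i)
    (hM : IsLeast {m : ℕ | ∀ i, W * N * v i < m ∧ N * w i < m} M)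
    (J : Finset (Fin N)) (hJ : (∑ i ∈ J, w i) ≤ W) :
    let σ : LStrat N := ⟨fun _ => (N : ℝ)⁻¹, fun i => if i ∈ J then 1 else 0⟩
    let τ : FStrat N := ⟨fun k => if k = 0 then 1 else 0, fun i => if i ∈ J then 1 else 0⟩
    BestResponse N w W M σ τ ∧
      (∀ τ' : FStrat N, BestResponse N w W M σ τ' → EU1 N v σ τ' ≤ EU1 N v σ τ) ∧
      EU1 N v σ τ = ∑ i ∈ J, (v i : ℝ) := by
  intro σ τ
  have hN' : (N : ℝ) ≠ 0 := Nat.cast_ne_zero.mpr hN.ne'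
  set S : ℝ := ∑ i ∈ J, (w i : ℝ) with hS
  have hSW : S ≤ (W : ℝ) := by rw [hS]; push_cast [← Nat.cast_sum]; exact_mod_cast hJ
  have hτg0 : τ.g 0 = 1 := by simp [τ]
  have hτvalid : FValid τ := by
    refine ⟨fun k => ?_, ?_, fun i => ?_⟩
    · dsimp only [τ]; split <;> norm_num
    · dsimp only [τ]; simp
    · dsimp only [τ]; split <;> norm_num
  have hτA : (∑ i ∈ Jᶜ, τ.s i * (w i : ℝ)) = 0 := by
    refine Finset.sum_eq_zero fun i hi => ?_
    have : i ∉ J := Finset.mem_compl.mp hi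
    simp [τ, this]
  have hEU2τ : EU2 N w W M σ τ = -S := by
    rw [show EU2 N w W M σ τ = EU2 N w W M ⟨fun _ => (N : ℝ)⁻¹, fun i => if i ∈ J then 1 else 0⟩ τ from rfl,
      EU2_eq hN w W M J τ hτvalid.2.1, hτg0, hτA]
    ring
  have hle : ∀ τ' : FStrat N, FValid τ' → EU2 N w W M σ τ' ≤ -S := by
    intro τ' hτ'
    obtain ⟨hg', hgsum', hs'⟩ := hτ'
    rw [show EU2 N w W M σ τ' = EU2 N w W M ⟨fun _ => (N : ℝ)⁻¹, fun i => if i ∈ J then 1 else 0⟩ τ' from rfl,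
      EU2_eq hN w W M J τ' hgsum']
    have hg0 : 0 ≤ τ'.g 0 := hg' 0
    have hg1 : τ'.g 0 ≤ 1 := by
      rw [← hgsum']
      exact Finset.single_le_sum (fun k _ => hg' k) (Finset.mem_univ 0)
    have hA : 0 ≤ ∑ i ∈ Jᶜ, τ'.s i * (w i : ℝ) :=
      Finset.sum_nonneg fun i _ => mul_nonneg (hs' i).1 (Nat.cast_nonneg _)
    nlinarith [mul_nonneg hg0 hA, mul_nonneg (sub_nonneg.mpr hg1) (sub_nonneg.mpr hSW)]
  have hEU1τ : EU1 N v σ τ = ∑ i ∈ J, (v i : ℝ) := by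
    rw [show EU1 N v σ τ = EU1 N v ⟨fun _ => (N : ℝ)⁻¹, fun i => if i ∈ J then 1 else 0⟩ τ from rfl,
      EU1_eq hN v J τ, hτg0, one_mul]
    simp only [τ]
    simp [ite_mul, Finset.sum_ite_mem]
  refine ⟨⟨hτvalid, fun τ' hτ' => (hle τ' hτ').trans_eq hEU2τ.symm⟩, ?_, hEU1τ⟩
  intro τ' ⟨hτ'valid, hτ'max⟩
  obtain ⟨hg', hgsum', hs'⟩ := hτ'valid
  have hg0 : 0 ≤ τ'.g 0 := hg' 0
  have hg1 : τ'.g 0 ≤ 1 := by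
    rw [← hgsum']
    exact Finset.single_le_sum (fun k _ => hg' k) (Finset.mem_univ 0)
  have hA : 0 ≤ ∑ i ∈ Jᶜ, τ'.s i * (w i : ℝ) :=
    Finset.sum_nonneg fun i _ => mul_nonneg (hs' i).1 (Nat.cast_nonneg _)
  have heq : EU2 N w W M σ τ' = -S :=
    le_antisymm (hle τ' ⟨hg', hgsum', hs'⟩) (hEU2τ ▸ hτ'max τ hτvalid)
  rw [show EU2 N w W M σ τ' = EU2 N w W M ⟨fun _ => (N : ℝ)⁻¹, fun i => if i ∈ J then 1 else 0⟩ τ' from rfl,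
    EU2_eq hN w W M J τ' hgsum'] at heq
  have hkey : τ'.g 0 * (∑ i ∈ Jᶜ, τ'.s i * (w i : ℝ)) = 0 := by
    have h2 : 0 ≤ (1 - τ'.g 0) * ((W : ℝ) - S) :=
      mul_nonneg (sub_nonneg.mpr hg1) (sub_nonneg.mpr hSW)
    nlinarith [mul_nonneg hg0 hA]
  rw [hEU1τ,
    show EU1 N v σ τ' = EU1 N v ⟨fun _ => (N : ℝ)⁻¹, fun i => if i ∈ J then 1 else 0⟩ τ' from rfl,
    EU1_eq hN v J τ']
  rcases mul_eq_zero.mp hkey with h0 | hA0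
  · rw [h0, zero_mul]
    exact Finset.sum_nonneg fun i _ => Nat.cast_nonneg _
  · have hsz : ∀ i ∈ Jᶜ, τ'.s i = 0 := by
      intro i hi
      have := (Finset.sum_eq_zero_iff_of_nonneg
        (fun i _ => mul_nonneg (hs' i).1 (Nat.cast_nonneg _))).mp hA0 i hi
      have hwne : ((w i : ℝ)) ≠ 0 := Nat.cast_ne_zero.mpr (hw i).ne'
      exact (mul_eq_zero.mp this).resolve_right hwne
    have hsplit : (∑ i, τ'.s i * (v i : ℝ)) = ∑ i ∈ J, τ'.s i * (v i : ℝ) := by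
      have hz : (∑ i ∈ Jᶜ, τ'.s i * (v i : ℝ)) = 0 :=
        Finset.sum_eq_zero fun i hi => by rw [hsz i hi, zero_mul]
      rw [← Finset.sum_add_sum_compl J (fun i => τ'.s i * (v i : ℝ)), hz, add_zero]
    rw [hsplit]
    calc τ'.g 0 * ∑ i ∈ J, τ'.s i * (v i : ℝ)
        ≤ ∑ i ∈ J, τ'.s i * (v i : ℝ) :=
          mul_le_of_le_one_left (Finset.sum_nonneg fun i _ =>
            mul_nonneg (hs' i).1 (Nat.cast_nonneg _)) hg1
      _ ≤ ∑ i ∈ J, (v i : ℝ) :=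
          Finset.sum_le_sum fun i _ =>
            mul_le_of_le_one_left (Nat.cast_nonneg _) (hs' i).2


end KnapsackGame
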